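/- Correctness of the BestPerm oracle: Given a ground set of N regular items plus a_⊥ with u(a_⊥) = 1, u: items → [0,1], w: items → ℝ, and cardinality bound m, the algorithm that (i) sorts items by descending w; (ii) if no regular item has weight above w(a_⊥), returns the best single item; (iii) if 1 ≤ J ≤ m items have weight above w(a_⊥), returns those J items in descending-w order; (iv) if J > m, returns the length-m subsequence of the top-J items (by descending w) maximizing f via the subset-selection dynamic programming — returns a list S_best with f(S_best, u, w) = max over all valid actions A of f(A, u, w), where a valid action is any ordered list of between 1 and m distinct regular items followed by a_⊥. -/

import Mathlib

/-- The cascading reward function. -/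
noncomputable def cascadeF {α : Type*} (u w : α → ℝ) : List α → ℝ
  | [] => 0
  | a :: t => u a * w a + (1 - u a) * cascadeF u w t

section Aux
variable {α : Type*} {u w : α → ℝ} {bot : α}

noncomputable def cascG (u w : α → ℝ) (bot : α) (L : List α) : ℝ :=
  cascadeF u w (L ++ [bot])

lemma cascG_nil (hbot : u bot = 1) : cascG u w bot [] = w bot := by
  simp [cascG, cascadeF, hbot]

lemma cascG_cons (a : α) (L : List α) :
    cascG u w bot (a :: L) = u a * w a + (1 - u a) * cascG u w bot L := by
  simp [cascG, cascadeF]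

variable (hu : ∀ a, 0 ≤ u a ∧ u a ≤ 1) (hbot : u bot = 1)
include hu hbot

/-- upper bound: convex combination -/
lemma cascG_le {c : ℝ} (hb : w bot ≤ c) :
    ∀ (L : List α), (∀ a ∈ L, w a ≤ c) → cascG u w bot L ≤ c := by
  intro L
  induction L with
  | nil => intro _; rw [cascG_nil hbot]; exact hb
  | cons a t ih =>
    intro h
    rw [cascG_cons]
    have h1 := ih (fun x hx => h x (List.mem_cons_of_mem a hx))
    have h2 := h a (List.mem_cons_self)
    have := (hu a).1; have := (hu a).2
    nlinarith

/-- lower bound -/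
lemma le_cascG {c : ℝ} (hb : c ≤ w bot) :
    ∀ (L : List α), (∀ a ∈ L, c ≤ w a) → c ≤ cascG u w bot L := by
  intro L
  induction L with
  | nil => intro _; rw [cascG_nil hbot]; exact hb
  | cons a t ih =>
    intro h
    rw [cascG_cons]
    have h1 := ih (fun x hx => h x (List.mem_cons_of_mem a hx))
    have h2 := h a (List.mem_cons_self)
    have := (hu a).1; have := (hu a).2
    nlinarith

omit hbot in
lemma cascG_cons_mono (a : α) {L L' : List α}
    (h : cascG u w bot L ≤ cascG u w bot L') :
    cascG u w bot (a :: L) ≤ cascG u w bot (a :: L') := by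
  rw [cascG_cons, cascG_cons]
  have := (hu a).1; have := (hu a).2
  nlinarith

omit hbot in
lemma cascG_swap {a b : α} (hab : w a ≤ w b) (L : List α) :
    cascG u w bot (a :: b :: L) ≤ cascG u w bot (b :: a :: L) := by
  rw [cascG_cons, cascG_cons, cascG_cons, cascG_cons]
  have ha := (hu a).1
  have hb := (hu b).1
  nlinarith [mul_nonneg (mul_nonneg ha hb) (sub_nonneg.mpr hab)]

/-- prepending a dominating good item doesn't decrease the value -/
lemma cascG_le_cons {a : α} {L : List α} (hb : w bot ≤ w a)
    (h : ∀ x ∈ L, w x ≤ w a) :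
    cascG u w bot L ≤ cascG u w bot (a :: L) := by
  rw [cascG_cons]
  have h1 := cascG_le hu hbot hb L h
  have := (hu a).1; have := (hu a).2
  nlinarith

omit hbot in
/-- moving a maximal item to the front doesn't decrease the value -/
lemma cascG_le_cons_erase [DecidableEq α] {b : α} :
    ∀ {L : List α}, b ∈ L → (∀ a ∈ L, w a ≤ w b) →
      cascG u w bot L ≤ cascG u w bot (b :: L.erase b) := by
  intro L
  induction L with
  | nil => intro h; exact absurd h (List.not_mem_nil)
  | cons a t ih =>
    intro hmem hmax
    by_cases hab : a = b
    · subst hab; rw [List.erase_cons_head]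
    · have hbt : b ∈ t := by
        rcases List.mem_cons.mp hmem with h | h
        · exact absurd h.symm hab
        · exact h
      rw [List.erase_cons_tail (by simpa using hab)]
      calc cascG u w bot (a :: t)
          ≤ cascG u w bot (a :: b :: t.erase b) :=
            cascG_cons_mono hu a (ih hbt (fun x hx => hmax x (List.mem_cons_of_mem a hx)))
        _ ≤ cascG u w bot (b :: a :: t.erase b) :=
            cascG_swap hu (hmax a (List.mem_cons_self)) _

omit hbot in
/-- a permutation of a descending-sorted list has value at most that of the sorted list -/
lemma cascG_perm_le_sorted [DecidableEq α] :
    ∀ {D M : List α}, M.Perm D → D.Pairwise (fun a b => w b ≤ w a) →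
      cascG u w bot M ≤ cascG u w bot D := by
  intro D
  induction D with
  | nil => intro M h _; rw [h.eq_nil]
  | cons b D' ih =>
    intro M h hsort
    rw [List.pairwise_cons] at hsort
    have hbM : b ∈ M := h.mem_iff.mpr (List.mem_cons_self)
    have hmax : ∀ a ∈ M, w a ≤ w b := by
      intro a ha
      rcases List.mem_cons.mp (h.subset ha) with h' | h'
      · exact le_of_eq (by rw [h'])
      · exact hsort.1 a h'
    have h1 := cascG_le_cons_erase (bot := bot) hu hbM hmax
    have h2 : (M.erase b).Perm D' := by
      have := h.erase b
      rwa [List.erase_cons_head] at this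
    exact h1.trans (cascG_cons_mono hu b (ih h2 hsort.2))

/-- filtering out items at most `w bot` doesn't decrease the value -/
lemma cascG_le_filter {p : α → Prop} [DecidablePred p]
    (hp : ∀ a, p a → w bot ≤ w a) (hnp : ∀ a, ¬ p a → w a ≤ w bot) :
    ∀ (L : List α), cascG u w bot L ≤ cascG u w bot (L.filter (fun a => decide (p a))) := by
  intro L
  induction L with
  | nil => simp
  | cons a t ih =>
    by_cases hpa : p a
    · rw [List.filter_cons_of_pos (by simpa using hpa)]
      exact cascG_cons_mono hu a ih
    · rw [List.filter_cons_of_neg (by simpa using hpa)]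
      have hwa : w a ≤ w bot := hnp a hpa
      have hge : w a ≤ cascG u w bot (t.filter (fun a => decide (p a))) := by
        refine le_cascG hu hbot hwa _ ?_
        intro x hx
        have := List.of_mem_filter hx
        exact hwa.trans (hp x (by simpa using this))
      rw [cascG_cons]
      have := (hu a).1; have := (hu a).2
      nlinarith [ih]

/-- monotonicity of filtering on a sorted list of good items -/
lemma cascG_filter_mono {p q : α → Prop} [DecidablePred p] [DecidablePred q]
    (hpq : ∀ a, p a → q a) :
    ∀ (D : List α), D.Pairwise (fun a b => w b ≤ w a) → (∀ a ∈ D, w bot ≤ w a) →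
      cascG u w bot (D.filter (fun a => decide (p a)))
        ≤ cascG u w bot (D.filter (fun a => decide (q a))) := by
  intro D
  induction D with
  | nil => simp
  | cons d D' ih =>
    intro hsort hgood
    rw [List.pairwise_cons] at hsort
    have ih' := ih hsort.2 (fun a ha => hgood a (List.mem_cons_of_mem d ha))
    by_cases hpd : p d
    · rw [List.filter_cons_of_pos (by simpa using hpd),
        List.filter_cons_of_pos (by simpa using hpq d hpd)]
      exact cascG_cons_mono hu d ih'
    · rw [List.filter_cons_of_neg (by simpa using hpd)]
      by_cases hqd : q d
      · rw [List.filter_cons_of_pos (by simpa using hqd)]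
        refine ih'.trans (cascG_le_cons hu hbot (hgood d (List.mem_cons_self)) ?_)
        intro x hx
        exact hsort.1 x (List.mem_of_mem_filter hx)
      · rw [List.filter_cons_of_neg (by simpa using hqd)]
        exact ih'

end Aux

/-- A valid action: an ordered list of between `1` and `m` distinct regular items
from the ground set, followed by the virtual item `a_⊥`. -/
def IsAction {α : Type*} (ground : Finset α) (bot : α) (m : ℕ) (A : List α) : Prop :=
  ∃ L : List α, A = L ++ [bot] ∧ L.Nodup ∧ 1 ≤ L.length ∧ L.length ≤ m ∧
    ∀ a ∈ L, a ∈ ground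

/-- Correctness of the `BestPerm` oracle. Let `T` be the set of regular items with
weight above `w(a_⊥)`.  Suppose `Sbest` is the output of the algorithm:
(i) if `T = ∅`, `Sbest = (a*, a_⊥)` for a regular item `a*` maximizing
`u(a)w(a) + (1−u(a))w(a_⊥)`; (ii) if `1 ≤ |T| ≤ m`, `Sbest` lists `T` in descending
order of `w` followed by `a_⊥`; (iii) if `|T| > m`, `Sbest` is a length-`m`
subsequence of the descending-`w` ordering of `T` maximizing the cascading reward,
followed by `a_⊥`.  Then `Sbest` is a valid action and
`f(Sbest,u,w) = max_{A ∈ 𝒜} f(A,u,w)`. -/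
theorem bestPerm_correct {α : Type*} [DecidableEq α]
    (ground : Finset α) (bot : α) (m : ℕ) (u w : α → ℝ)
    (hbg : bot ∉ ground) (hg : ground.Nonempty) (hm1 : 1 ≤ m) (hm2 : m ≤ ground.card)
    (hu : ∀ a, 0 ≤ u a ∧ u a ≤ 1) (hbot : u bot = 1)
    (T : Finset α) (hT : ∀ a, a ∈ T ↔ a ∈ ground ∧ w bot < w a)
    (Sbest : List α)
    (hcase0 : T = ∅ →
      ∃ astar ∈ ground,
        (∀ a ∈ ground, u a * w a + (1 - u a) * w bot
            ≤ u astar * w astar + (1 - u astar) * w bot) ∧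
        Sbest = [astar, bot])
    (hcase1 : T.Nonempty → T.card ≤ m →
      ∃ L : List α, L.Perm T.toList ∧ L.Pairwise (fun a b => w b ≤ w a) ∧
        Sbest = L ++ [bot])
    (hcase2 : m < T.card →
      ∃ D L : List α, D.Perm T.toList ∧ D.Pairwise (fun a b => w b ≤ w a) ∧
        L.Sublist D ∧ L.length = m ∧
        (∀ L' : List α, L'.Sublist D → L'.length = m →
          cascadeF u w (L' ++ [bot]) ≤ cascadeF u w (L ++ [bot])) ∧
        Sbest = L ++ [bot]) :
    IsAction ground bot m Sbest ∧
      ∀ A : List α, IsAction ground bot m A →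
        cascadeF u w A ≤ cascadeF u w Sbest := by
  classical
  have key : ∀ L : List α, cascadeF u w (L ++ [bot]) = cascG u w bot L := fun _ => rfl
  by_cases hTe : T = ∅
  · -- Case 0 : no item beats bot
    obtain ⟨astar, hastar, hmaxa, hS⟩ := hcase0 hTe
    have hSg : cascadeF u w Sbest = cascG u w bot [astar] := by rw [hS]; rfl
    refine ⟨⟨[astar], by simp [hS], List.nodup_singleton _, le_refl _, hm1,
      by simpa using hastar⟩, ?_⟩
    rintro A ⟨M, rfl, hnd, h1, h2, hgr⟩
    rw [key, hSg]
    have hbad : ∀ a ∈ M, w a ≤ w bot := by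
      intro a ha
      by_contra hc
      push_neg at hc
      have : a ∈ T := (hT a).mpr ⟨hgr a ha, hc⟩
      simp [hTe] at this
    cases M with
    | nil => simp at h1
    | cons a t =>
      rw [cascG_cons]
      have hgt : cascG u w bot t ≤ w bot :=
        cascG_le hu hbot (le_refl _) t (fun x hx => hbad x (List.mem_cons_of_mem a hx))
      have h2' := hmaxa a (hgr a (List.mem_cons_self))
      have hg1 : cascG u w bot [astar] = u astar * w astar + (1 - u astar) * w bot := by
        rw [cascG_cons, cascG_nil hbot]
      rw [hg1]
      have := (hu a).1; have := (hu a).2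
      nlinarith
  · have hTne : T.Nonempty := Finset.nonempty_iff_ne_empty.mpr hTe
    have hgoodT : ∀ a ∈ T, w bot < w a := fun a ha => ((hT a).mp ha).2
    have hTnd : T.toList.Nodup := Finset.nodup_toList T
    by_cases hcard : T.card ≤ m
    · -- Case 1 : 1 ≤ |T| ≤ m
      obtain ⟨D, hDperm, hDsort, hS⟩ := hcase1 hTne hcard
      have hDnd : D.Nodup := hDperm.nodup_iff.mpr hTnd
      have hDmem : ∀ a, a ∈ D ↔ a ∈ T := by
        intro a; rw [hDperm.mem_iff, Finset.mem_toList]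
      have hDlen : D.length = T.card := by
        rw [hDperm.length_eq, Finset.length_toList]
      have hgoodD : ∀ a ∈ D, w bot ≤ w a :=
        fun a ha => le_of_lt (hgoodT a ((hDmem a).mp ha))
      have hSg : cascadeF u w Sbest = cascG u w bot D := by rw [hS]; rfl
      refine ⟨⟨D, hS, hDnd, by rw [hDlen]; exact Finset.card_pos.mpr hTne, by rw [hDlen]; exact hcard, ?_⟩, ?_⟩
      · exact fun a ha => ((hT a).mp ((hDmem a).mp ha)).1
      rintro A ⟨M, rfl, hnd, h1, h2, hgr⟩
      rw [key, hSg]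
      set M' := M.filter (fun a => decide (w bot < w a)) with hM'def
      have step1 : cascG u w bot M ≤ cascG u w bot M' :=
        cascG_le_filter hu hbot (p := fun a => w bot < w a)
          (fun a h => le_of_lt h) (fun a h => not_lt.mp h) M
      have hM'T : ∀ a ∈ M', a ∈ T := by
        intro a ha
        have h1 := List.mem_of_mem_filter ha
        have h2 := List.of_mem_filter ha
        exact (hT a).mpr ⟨hgr a h1, by simpa using h2⟩
      have hM'nd : M'.Nodup := hnd.filter _
      set M'' := D.filter (fun a => decide (a ∈ M')) with hM''def
      have hperm2 : M'.Perm M'' := by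
        apply List.perm_of_nodup_nodup_toFinset_eq hM'nd (hDnd.filter _)
        ext x
        simp only [List.mem_toFinset, hM''def, List.mem_filter, decide_eq_true_eq]
        constructor
        · intro hx; exact ⟨(hDmem x).mpr (hM'T x hx), hx⟩
        · intro hx; exact hx.2
      have step2 : cascG u w bot M' ≤ cascG u w bot M'' :=
        cascG_perm_le_sorted hu hperm2 (hDsort.filter _)
      have step3 : cascG u w bot M'' ≤ cascG u w bot D := by
        have := cascG_filter_mono hu hbot (p := fun a => a ∈ M') (q := fun _ => True)
          (fun a _ => trivial) D hDsort hgoodD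
        simpa using this
      exact step1.trans (step2.trans step3)
    · -- Case 2 : |T| > m
      push_neg at hcard
      obtain ⟨D, L, hDperm, hDsort, hsub, hlen, hDP, hS⟩ := hcase2 hcard
      have hDnd : D.Nodup := hDperm.nodup_iff.mpr hTnd
      have hDmem : ∀ a, a ∈ D ↔ a ∈ T := by
        intro a; rw [hDperm.mem_iff, Finset.mem_toList]
      have hgoodD : ∀ a ∈ D, w bot ≤ w a :=
        fun a ha => le_of_lt (hgoodT a ((hDmem a).mp ha))
      have hSg : cascadeF u w Sbest = cascG u w bot L := by rw [hS]; rfl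
      refine ⟨⟨L, hS, hsub.nodup hDnd, by omega, le_of_eq hlen, ?_⟩, ?_⟩
      · exact fun a ha => ((hT a).mp ((hDmem a).mp (hsub.subset ha))).1
      rintro A ⟨M, rfl, hnd, h1, h2, hgr⟩
      rw [key, hSg]
      set M' := M.filter (fun a => decide (w bot < w a)) with hM'def
      have step1 : cascG u w bot M ≤ cascG u w bot M' :=
        cascG_le_filter hu hbot (p := fun a => w bot < w a)
          (fun a h => le_of_lt h) (fun a h => not_lt.mp h) M
      have hM'T : ∀ a ∈ M', a ∈ T := by
        intro a ha
        have ha1 := List.mem_of_mem_filter ha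
        have ha2 := List.of_mem_filter ha
        exact (hT a).mpr ⟨hgr a ha1, by simpa using ha2⟩
      have hM'nd : M'.Nodup := hnd.filter _
      -- extend M' to an m-element subset S' of T
      have hsubT : M'.toFinset ⊆ T := by
        intro x hx; exact hM'T x (List.mem_toFinset.mp hx)
      have hlenle : M'.toFinset.card ≤ m := by
        have := List.toFinset_card_le (l := M')
        have h3 : M'.length ≤ M.length := List.length_filter_le _ _
        omega
      obtain ⟨S', hS'1, hS'2, hS'3⟩ :=
        Finset.exists_subsuperset_card_eq hsubT hlenle (le_of_lt hcard)
      set M'' := D.filter (fun a => decide (a ∈ M')) with hM''def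
      have hperm2 : M'.Perm M'' := by
        apply List.perm_of_nodup_nodup_toFinset_eq hM'nd (hDnd.filter _)
        ext x
        simp only [List.mem_toFinset, hM''def, List.mem_filter, decide_eq_true_eq]
        constructor
        · intro hx; exact ⟨(hDmem x).mpr (hM'T x hx), hx⟩
        · intro hx; exact hx.2
      have step2 : cascG u w bot M' ≤ cascG u w bot M'' :=
        cascG_perm_le_sorted hu hperm2 (hDsort.filter _)
      set M₁ := D.filter (fun a => decide (a ∈ S')) with hM₁def
      have step3 : cascG u w bot M'' ≤ cascG u w bot M₁ :=
        cascG_filter_mono hu hbot (p := fun a => a ∈ M') (q := fun a => a ∈ S')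
          (fun a ha => hS'1 (List.mem_toFinset.mpr ha)) D hDsort hgoodD
      have hM₁len : M₁.length = m := by
        have hnd1 : M₁.Nodup := hDnd.filter _
        have htf : M₁.toFinset = S' := by
          ext x
          simp only [List.mem_toFinset, hM₁def, List.mem_filter, decide_eq_true_eq]
          constructor
          · intro hx; exact hx.2
          · intro hx; exact ⟨(hDmem x).mpr (hS'2 hx), hx⟩
        have := List.toFinset_card_of_nodup hnd1
        rw [htf, hS'3] at this
        omega
      have step4 : cascG u w bot M₁ ≤ cascG u w bot L := by
        have := hDP M₁ List.filter_sublist hM₁len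
        rwa [key, key] at this
      exact step1.trans (step2.trans (step3.trans step4))
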